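/- For any two-layer single-input-channel zero-padding CNN f = C₂ ∘ σ ∘ C₁ on R^3 with kernel size 3, the quantity f₁(x,y,0) - f₂(0,x,y) depends only on x (not on y). Explicitly, f₁(x,y,0) - f₂(0,x,y) = -Σ_i b^i_{-1} σ(a^i_1 x + δ_i). -/

import Mathlib

/-- Zero-extension of a finite vector to an integer-indexed sequence. -/
def zpad (d : ℕ) (x : Fin d → ℝ) (m : ℤ) : ℝ :=
  if h : 0 ≤ m ∧ m < (d : ℤ) then x ⟨m.toNat, by omega⟩ else 0

/-- Zero padding convolution with kernel `w` supported on `[-k, k]`. -/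
noncomputable def zconv (d k : ℕ) (w : ℤ → ℝ) (x : Fin d → ℝ) (i : Fin d) : ℝ :=
  ∑ j ∈ Finset.Icc (-(k : ℤ)) (k : ℤ), w j * zpad d x ((i : ℤ) + j)

/-- For a two-layer single-input-channel zero-padding CNN `f = C₂ ∘ σ ∘ C₁` on `ℝ³`
with kernel size 3 (`C₁` with kernels `(a⁻₁ⁱ, a₀ⁱ, a₁ⁱ)`, biases `δᵢ`; `C₂` with
kernels `(b⁻₁ⁱ, b₀ⁱ, b₁ⁱ)`, bias `δ₀`), the quantity `f₁(x,y,0) - f₂(0,x,y)` depends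
only on `x`: it equals `-∑ᵢ b⁻₁ⁱ σ(a₁ⁱ x + δᵢ)`. -/

lemma zconv3 (w : ℤ → ℝ) (x : Fin 3 → ℝ) (i : Fin 3) :
    zconv 3 1 w x i =
      w (-1) * zpad 3 x ((i:ℤ) + -1) + w 0 * zpad 3 x ((i:ℤ) + 0)
        + w 1 * zpad 3 x ((i:ℤ) + 1) := by
  have h : Finset.Icc (-((1:ℕ) : ℤ)) ((1:ℕ) : ℤ) = {-1, 0, 1} := by decide
  rw [zconv, h]
  rw [show ({-1, 0, 1} : Finset ℤ) = insert (-1) (insert 0 {1}) from rfl]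
  rw [Finset.sum_insert (by decide), Finset.sum_insert (by decide), Finset.sum_singleton]; ring

lemma zpA (v : Fin 3 → ℝ) : zpad 3 v (-1) = 0 := by norm_num [zpad]
lemma zpB (v : Fin 3 → ℝ) : zpad 3 v 0 = v 0 := by norm_num [zpad]
lemma zpC (v : Fin 3 → ℝ) : zpad 3 v 1 = v 1 := by norm_num [zpad]
lemma zpD (v : Fin 3 → ℝ) : zpad 3 v 2 = v 2 := by norm_num [zpad]; rfl
lemma zpE (v : Fin 3 → ℝ) : zpad 3 v 3 = 0 := by norm_num [zpad]

theorem two_layer_diff_dep_only_x (σ : ℝ → ℝ) (n : ℕ)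
    (am a0 a1 δ bm b0 b1 : Fin n → ℝ) (δ0 : ℝ) :
    ∀ x y : ℝ,
      (fun (v : Fin 3 → ℝ) (p : Fin 3) =>
          (∑ i : Fin n,
            zconv 3 1 (fun j => if j = -1 then bm i else if j = 0 then b0 i
                else if j = 1 then b1 i else 0)
              (fun q => σ (zconv 3 1 (fun j => if j = -1 then am i else if j = 0 then a0 i
                  else if j = 1 then a1 i else 0) v q + δ i)) p) + δ0)
        ![x, y, 0] 0
      - (fun (v : Fin 3 → ℝ) (p : Fin 3) =>
          (∑ i : Fin n,
            zconv 3 1 (fun j => if j = -1 then bm i else if j = 0 then b0 i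
                else if j = 1 then b1 i else 0)
              (fun q => σ (zconv 3 1 (fun j => if j = -1 then am i else if j = 0 then a0 i
                  else if j = 1 then a1 i else 0) v q + δ i)) p) + δ0)
        ![0, x, y] 1
      = -∑ i : Fin n, bm i * σ (a1 i * x + δ i) := by
  intro x y
  rw [add_sub_add_right_eq_sub, ← Finset.sum_sub_distrib, ← Finset.sum_neg_distrib]
  refine Finset.sum_congr rfl fun i _ => ?_
  norm_num [zconv3, zpA, zpB, zpC, zpD, zpE, Fin.val_zero, Fin.val_one,
    Matrix.cons_val_zero, Matrix.cons_val_one, Matrix.head_cons, Fin.isValue, Matrix.cons_val_two, Matrix.tail_cons]
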